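/- If an integer s appears t times in a (K,F,Z,S) PDA, then t ≤ Z + 1. -/

import Mathlib

open scoped Classical

/-- A `(K,F,Z,S)` placement delivery array: entries are `none` (the star `*`) or
`some s` with `s ∈ {1,…,S}`; each column contains exactly `Z` stars (C1); any two
equal integer entries lie in distinct rows and distinct columns, with stars at the
complementary positions of the corresponding `2×2` subarray (C2). -/
def IsPDA (K F Z S : ℕ) (P : Fin F → Fin K → Option ℕ) : Prop :=
  (∀ i j s, P i j = some s → s ∈ Finset.Icc 1 S) ∧
  (∀ j : Fin K, (Finset.univ.filter fun i => P i j = none).card = Z) ∧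
  (∀ i₁ j₁ i₂ j₂ s, P i₁ j₁ = some s → P i₂ j₂ = some s → (i₁, j₁) ≠ (i₂, j₂) →
    i₁ ≠ i₂ ∧ j₁ ≠ j₂ ∧ P i₁ j₂ = none ∧ P i₂ j₁ = none)

/-- If an integer s appears t times in a (K,F,Z,S) PDA, then t ≤ Z + 1. -/
theorem pda_integer_multiplicity_le (K F Z S : ℕ)
    (P : Fin F → Fin K → Option ℕ) (hP : IsPDA K F Z S P) (s : ℕ) :
    (Finset.univ.filter fun p : Fin F × Fin K => P p.1 p.2 = some s).card
      ≤ Z + 1 := by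
  obtain ⟨-, hZ, hC2⟩ := hP
  set T := Finset.univ.filter fun p : Fin F × Fin K => P p.1 p.2 = some s with hT
  rcases T.eq_empty_or_nonempty with h | ⟨⟨i₀, j₀⟩, h0⟩
  · simp [h]
  have h0' : P i₀ j₀ = some s := by
    simpa [hT] using h0
  have key : (T.erase (i₀, j₀)).card ≤ Z := by
    rw [← hZ j₀]
    apply Finset.card_le_card_of_injOn (fun p => p.1)
    · rintro ⟨i, j⟩ hp
      rw [Finset.mem_coe, Finset.mem_erase] at hp
      obtain ⟨hne, hmem⟩ := hp
      have hij : P i j = some s := by simpa [hT] using hmem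
      have := hC2 i j i₀ j₀ s hij h0' hne
      simp [this.2.2.1]
    · rintro ⟨i₁, j₁⟩ h1 ⟨i₂, j₂⟩ h2 heq
      rw [Finset.mem_coe, Finset.mem_erase] at h1 h2
      have hij1 : P i₁ j₁ = some s := by simpa [hT] using h1.2
      have hij2 : P i₂ j₂ = some s := by simpa [hT] using h2.2
      by_contra hne
      exact (hC2 i₁ j₁ i₂ j₂ s hij1 hij2 hne).1 heq
  have := Finset.card_erase_add_one h0
  omega
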